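/- Let m₁, m₂ be distinct nonzero integers, let r be a positive integer, and let b be an integer coprime to r. Let q₁, q₂ be squarefree positive integers, and let P be a positive integer dividing lcm(q₁,q₂)·r. Then |Σ e(m₁a₁/q₁ + m₂a₂/q₂)| ≤ |m₁ · m₂ · (m₁ - m₂)| · τ(P)², where the sum is over pairs (a₁, a₂) with a₁ ∈ {1,...,q₁} coprime to q₁, a₂ ∈ {1,...,q₂} coprime to q₂, and a₁q₂r + a₂q₁r ≡ b·q₁q₂ (mod P·gcd(q₁,q₂)). -/

import Mathlib

/-- `e(θ) = exp(2πiθ)`. -/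
noncomputable def e (θ : ℝ) : ℂ := Complex.exp (2 * Real.pi * Complex.I * θ)

lemma e_add (x y : ℝ) : e (x + y) = e x * e y := by
  simp [e, mul_add, Complex.exp_add]

lemma e_int (n : ℤ) : e (n : ℝ) = 1 := by
  have h := Complex.exp_int_mul_two_pi_mul_I n
  rw [e, show (2 * (Real.pi:ℂ) * Complex.I * ((n:ℝ):ℂ)) = (n:ℤ) * (2 * Real.pi * Complex.I) by
    push_cast; ring, h]

lemma abs_e (x : ℝ) : ‖e x‖ = 1 := by
  rw [e, show (2 * (Real.pi:ℂ) * Complex.I * (x:ℝ)) = ((2 * Real.pi * x : ℝ) : ℂ) * Complex.I by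
    push_cast; ring]
  exact Complex.norm_exp_ofReal_mul_I _

lemma e_nat_mul (k : ℕ) (x : ℝ) : e ((k : ℝ) * x) = e x ^ k := by
  induction k with
  | zero => simp [e]
  | succ n ih => push_cast; rw [add_mul, one_mul, e_add, ih, pow_succ]

lemma e_eq_one_iff (n : ℤ) (q : ℕ) (hq : 0 < q) : e ((n : ℝ) / q) = 1 ↔ (q : ℤ) ∣ n := by
  rw [e, Complex.exp_eq_one_iff]
  constructor
  · rintro ⟨m, hm⟩
    have h1 : ((n : ℝ) / q : ℂ) = (m : ℂ) := by
      have h2 : (2 * (Real.pi:ℂ) * Complex.I) ≠ 0 := by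
        simp [Real.pi_ne_zero, Complex.I_ne_zero, Complex.ofReal_ne_zero]
      have hm' : (2 * (Real.pi:ℂ) * Complex.I) * (((n : ℝ) / q : ℝ) : ℂ) =
          (2 * (Real.pi:ℂ) * Complex.I) * (m : ℂ) := by rw [hm]; ring
      have := mul_left_cancel₀ h2 hm'
      exact_mod_cast this
    have h3 : (n : ℝ) / q = (m : ℝ) := by exact_mod_cast h1
    refine ⟨m, ?_⟩
    have hq' : (q : ℝ) ≠ 0 := Nat.cast_ne_zero.mpr hq.ne'
    have : (n : ℝ) = (q : ℝ) * m := by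
      field_simp at h3; linarith [h3]
    exact_mod_cast this
  · rintro ⟨c, rfl⟩
    refine ⟨c, ?_⟩
    have hq' : (q : ℝ) ≠ 0 := Nat.cast_ne_zero.mpr hq.ne'
    have h : (((q : ℤ) * c : ℤ) : ℝ) / (q : ℝ) = (c : ℝ) := by
      push_cast; field_simp
    rw [h]
    push_cast; ring

lemma geo (q : ℕ) (hq : 0 < q) (n : ℤ) :
    ∑ k ∈ Finset.range q, e ((k : ℝ) * n / q) = if (q : ℤ) ∣ n then (q : ℂ) else 0 := by
  have hterm : ∀ k : ℕ, e ((k : ℝ) * n / q) = e ((n : ℝ) / q) ^ k := by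
    intro k
    rw [← e_nat_mul]
    congr 1
    ring
  simp_rw [hterm]
  by_cases h : (q : ℤ) ∣ n
  · rw [if_pos h]
    have h1 : e ((n : ℝ) / q) = 1 := (e_eq_one_iff n q hq).mpr h
    simp [h1]
  · rw [if_neg h]
    have h1 : e ((n : ℝ) / q) ≠ 1 := fun hc => h ((e_eq_one_iff n q hq).mp hc)
    rw [geom_sum_eq h1]
    have h2 : e ((n : ℝ) / q) ^ q = 1 := by
      rw [← e_nat_mul]
      have : (q : ℝ) * ((n:ℝ)/q) = (n : ℝ) := by
        field_simp
      rw [this, e_int]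
    rw [h2]
    simp

open ArithmeticFunction ArithmeticFunction.Moebius ArithmeticFunction.zeta in
lemma moebius_ind (m : ℕ) : ∑ d ∈ m.divisors, (μ d : ℤ) = if m = 1 then 1 else 0 := by
  have h := (coe_mul_zeta_apply (f := (μ : ArithmeticFunction ℤ)) (x := m)).symm
  rw [moebius_mul_coe_zeta, one_apply] at h
  exact h

open ArithmeticFunction ArithmeticFunction.Moebius ArithmeticFunction.zeta in
lemma totient_moebius (n : ℕ) (hn : 0 < n) :
    (Nat.totient n : ℤ) = ∑ t ∈ n.divisors, μ (n / t) * (t : ℤ) := by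
  have key := (sum_eq_iff_sum_smul_moebius_eq (R := ℤ)
    (f := fun i => (Nat.totient i : ℤ)) (g := fun i => (i : ℤ))).mp ?_ n hn
  · rw [← key, Nat.sum_divisorsAntidiagonal' (f := fun x y => μ x • (y : ℤ))]
    exact Finset.sum_congr rfl fun t _ => smul_eq_mul _ _
  · intro n _
    exact_mod_cast congrArg (Nat.cast (R := ℤ)) (Nat.sum_totient n)

open ArithmeticFunction ArithmeticFunction.Moebius ArithmeticFunction.zeta in
lemma moebius_natAbs_le (m : ℕ) : (μ m : ℤ).natAbs ≤ 1 := by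
  by_cases h : Squarefree m
  · rw [moebius_apply_of_squarefree h, Int.natAbs_pow]
    simp
  · rw [moebius_eq_zero_of_not_squarefree h]
    simp

lemma sum_Icc_one_eq_sum_range {M : Type*} [AddCommMonoid M] (f : ℕ → M) (m : ℕ) (hm : 0 < m)
    (h : f m = f 0) : ∑ j ∈ Finset.Icc 1 m, f j = ∑ j ∈ Finset.range m, f j := by
  rw [← Finset.Ico_add_one_right_eq_Icc, Finset.sum_Ico_succ_top (by omega), Finset.range_eq_Ico,
    Finset.sum_eq_sum_Ico_succ_bot hm, h, add_comm]

lemma gcd_divisors (a q : ℕ) (hq : q ≠ 0) :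
    (Nat.gcd a q).divisors = q.divisors.filter (fun d => d ∣ a) := by
  ext d
  simp only [Nat.mem_divisors, Finset.mem_filter, Nat.dvd_gcd_iff]
  constructor
  · rintro ⟨⟨h1, h2⟩, -⟩
    exact ⟨⟨h2, hq⟩, h1⟩
  · rintro ⟨⟨h2, -⟩, h1⟩
    exact ⟨⟨h1, h2⟩, Nat.gcd_ne_zero_right hq⟩

open ArithmeticFunction ArithmeticFunction.Moebius ArithmeticFunction.zeta in
lemma ramanujan_bound (q : ℕ) (hq : Squarefree q) (n : ℤ) :
    ‖∑ a ∈ (Finset.Icc 1 q).filter (fun a => Nat.gcd a q = 1),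
      e ((a : ℝ) * (n : ℝ) / q)‖ ≤ (Nat.gcd n.natAbs q : ℝ) := by
  have hq0 : q ≠ 0 := hq.ne_zero
  have hqpos : 0 < q := Nat.pos_of_ne_zero hq0
  set g := Nat.gcd n.natAbs q with hg
  have hgq : g ∣ q := Nat.gcd_dvd_right _ _
  have hg0 : g ≠ 0 := Nat.gcd_ne_zero_right hq0
  -- Step 1: insert Möbius indicator
  have step1 : ∑ a ∈ (Finset.Icc 1 q).filter (fun a => Nat.gcd a q = 1),
      e ((a : ℝ) * (n : ℝ) / q)
      = ∑ d ∈ q.divisors, (μ d : ℂ) *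
          ∑ a ∈ (Finset.Icc 1 q).filter (fun a => d ∣ a), e ((a : ℝ) * (n : ℝ) / q) := by
    rw [Finset.sum_filter]
    have h1 : ∀ a ∈ Finset.Icc 1 q,
        (if Nat.gcd a q = 1 then e ((a : ℝ) * (n : ℝ) / q) else 0)
        = ∑ d ∈ q.divisors, (if d ∣ a then (μ d : ℂ) * e ((a : ℝ) * (n : ℝ) / q) else 0) := by
      intro a _
      have h2 : ((if Nat.gcd a q = 1 then (1:ℤ) else 0 : ℤ) : ℂ) =
          ∑ d ∈ (Nat.gcd a q).divisors, (μ d : ℂ) := by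
        rw [← moebius_ind]
        push_cast
        rfl
      rw [gcd_divisors a q hq0] at h2
      calc (if Nat.gcd a q = 1 then e ((a : ℝ) * (n : ℝ) / q) else 0)
          = ((if Nat.gcd a q = 1 then (1:ℤ) else 0 : ℤ) : ℂ) * e ((a : ℝ) * (n : ℝ) / q) := by
            split <;> simp
        _ = (∑ d ∈ q.divisors.filter (fun d => d ∣ a), (μ d : ℂ)) * e ((a : ℝ) * (n : ℝ) / q) := by
            rw [h2]
        _ = ∑ d ∈ q.divisors.filter (fun d => d ∣ a), (μ d : ℂ) * e ((a : ℝ) * (n : ℝ) / q) := by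
            rw [Finset.sum_mul]
        _ = ∑ d ∈ q.divisors, (if d ∣ a then (μ d : ℂ) * e ((a : ℝ) * (n : ℝ) / q) else 0) := by
            rw [Finset.sum_filter]
    rw [Finset.sum_congr rfl h1, Finset.sum_comm]
    refine Finset.sum_congr rfl fun d _ => ?_
    rw [← Finset.sum_filter, Finset.mul_sum]
  -- Step 2: evaluate inner sum
  have step2 : ∀ d ∈ q.divisors,
      ∑ a ∈ (Finset.Icc 1 q).filter (fun a => d ∣ a), e ((a : ℝ) * (n : ℝ) / q)
      = if ((q / d : ℕ) : ℤ) ∣ n then ((q / d : ℕ) : ℂ) else 0 := by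
    intro d hd
    rw [Nat.mem_divisors] at hd
    obtain ⟨hdq, -⟩ := hd
    have hd0 : 0 < d := Nat.pos_of_dvd_of_pos hdq hqpos
    have hm0 : 0 < q / d := Nat.div_pos (Nat.le_of_dvd hqpos hdq) hd0
    have hbij : ∑ a ∈ (Finset.Icc 1 q).filter (fun a => d ∣ a), e ((a : ℝ) * (n : ℝ) / q)
        = ∑ j ∈ Finset.Icc 1 (q / d), e ((j : ℝ) * (n : ℝ) / ((q / d : ℕ) : ℝ)) := by
      refine Finset.sum_nbij' (fun a => a / d) (fun j => d * j) ?_ ?_ ?_ ?_ ?_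
      · intro a ha
        simp only [Finset.mem_filter, Finset.mem_Icc] at ha ⊢
        obtain ⟨⟨ha1, ha2⟩, hda⟩ := ha
        constructor
        · exact Nat.one_le_div_iff hd0 |>.mpr (Nat.le_of_dvd (by omega) hda)
        · exact Nat.div_le_div_right ha2
      · intro j hj
        simp only [Finset.mem_filter, Finset.mem_Icc] at hj ⊢
        obtain ⟨hj1, hj2⟩ := hj
        refine ⟨⟨by nlinarith, ?_⟩, Dvd.intro j rfl⟩
        calc d * j ≤ d * (q / d) := Nat.mul_le_mul_left d hj2
          _ = q := Nat.mul_div_cancel' hdq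
      · intro a ha
        simp only [Finset.mem_filter, Finset.mem_Icc] at ha
        exact Nat.mul_div_cancel' ha.2
      · intro j hj
        exact Nat.mul_div_cancel_left j hd0
      · intro a ha
        simp only [Finset.mem_filter, Finset.mem_Icc] at ha
        obtain ⟨⟨ha1, ha2⟩, hda⟩ := ha
        congr 1
        have e1 : (a : ℝ) = (d : ℝ) * ((a / d : ℕ) : ℝ) := by
          exact_mod_cast (Nat.mul_div_cancel' hda).symm
        have e2 : (q : ℝ) = (d : ℝ) * ((q / d : ℕ) : ℝ) := by
          exact_mod_cast (Nat.mul_div_cancel' hdq).symm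
        rw [e1, e2, mul_assoc, mul_div_mul_left]
        exact Nat.cast_ne_zero.mpr hd0.ne'
    rw [hbij, sum_Icc_one_eq_sum_range _ _ hm0 ?side, geo (q / d) hm0 n]
    case side =>
      have hm0' : ((q / d : ℕ) : ℝ) ≠ 0 := Nat.cast_ne_zero.mpr hm0.ne'
      have h1 : ((q / d : ℕ) : ℝ) * (n : ℝ) / ((q / d : ℕ) : ℝ) = ((n : ℤ) : ℝ) := by
        field_simp
      rw [h1, e_int]
      norm_num [e]
  -- Step 3: reindex d ↦ q / d
  have step3 : ∑ d ∈ q.divisors, (μ d : ℂ) *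
        (if ((q / d : ℕ) : ℤ) ∣ n then ((q / d : ℕ) : ℂ) else 0)
      = ∑ t ∈ q.divisors, (μ (q / t) : ℂ) * (if ((t : ℕ) : ℤ) ∣ n then (t : ℂ) else 0) := by
    rw [← Nat.sum_div_divisors q (fun t => (μ (q / t) : ℂ) * (if ((t : ℕ) : ℤ) ∣ n then (t : ℂ) else 0))]
    refine Finset.sum_congr rfl fun d hd => ?_
    rw [Nat.mem_divisors] at hd
    rw [Nat.div_div_self hd.1 hd.2]
  -- Step 4: restrict to divisors of g
  have step4 : ∑ t ∈ q.divisors, (μ (q / t) : ℂ) * (if ((t : ℕ) : ℤ) ∣ n then (t : ℂ) else 0)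
      = ∑ t ∈ g.divisors, (μ (q / t) : ℂ) * (t : ℂ) := by
    have hset : g.divisors = q.divisors.filter (fun t => ((t : ℕ) : ℤ) ∣ n) := by
      ext t
      simp only [Nat.mem_divisors, Finset.mem_filter]
      have hiff : (t : ℤ) ∣ n ↔ t ∣ n.natAbs := by
        rw [← Int.natAbs_dvd_natAbs, Int.natAbs_natCast]
      constructor
      · rintro ⟨ht, -⟩
        exact ⟨⟨ht.trans hgq, hq0⟩, hiff.mpr ((Nat.dvd_gcd_iff.mp ht).1)⟩
      · rintro ⟨⟨htq, -⟩, htn⟩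
        exact ⟨Nat.dvd_gcd (hiff.mp htn) htq, hg0⟩
    rw [hset, Finset.sum_filter]
    exact Finset.sum_congr rfl fun t _ => by split <;> simp
  -- Step 5: factor out μ(q/g) and sum to totient
  have step5 : ∑ t ∈ g.divisors, (μ (q / t) : ℂ) * (t : ℂ)
      = (μ (q / g) : ℂ) * (Nat.totient g : ℂ) := by
    have hcop : Nat.Coprime (q / g) g := by
      have hsq : Squarefree ((q / g) * g) := by
        rwa [Nat.div_mul_cancel hgq]
      exact (Nat.squarefree_mul_iff.mp hsq).1
    have hfac : ∀ t ∈ g.divisors, (μ (q / t) : ℂ) = (μ (q / g) : ℂ) * (μ (g / t) : ℂ) := by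
      intro t ht
      rw [Nat.mem_divisors] at ht
      obtain ⟨htg, -⟩ := ht
      have hqt : q / t = (q / g) * (g / t) := by
        rw [Nat.div_mul_div_comm hgq htg, mul_comm q g, Nat.mul_div_mul_left q t (Nat.pos_of_ne_zero hg0)]
      have hcop2 : Nat.Coprime (q / g) (g / t) :=
        hcop.coprime_dvd_right (Nat.div_dvd_of_dvd htg)
      rw [hqt, isMultiplicative_moebius.map_mul_of_coprime hcop2]
      push_cast
      ring
    calc ∑ t ∈ g.divisors, (μ (q / t) : ℂ) * (t : ℂ)
        = ∑ t ∈ g.divisors, (μ (q / g) : ℂ) * ((μ (g / t) : ℂ) * (t : ℂ)) := by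
          refine Finset.sum_congr rfl fun t ht => ?_
          rw [hfac t ht, mul_assoc]
      _ = (μ (q / g) : ℂ) * ∑ t ∈ g.divisors, (μ (g / t) : ℂ) * (t : ℂ) := by
          rw [Finset.mul_sum]
      _ = (μ (q / g) : ℂ) * (Nat.totient g : ℂ) := by
          congr 1
          have h := totient_moebius g (Nat.pos_of_ne_zero hg0)
          calc ∑ t ∈ g.divisors, (μ (g / t) : ℂ) * (t : ℂ)
              = ((∑ t ∈ g.divisors, μ (g / t) * (t : ℤ) : ℤ) : ℂ) := by push_cast; rfl
            _ = ((Nat.totient g : ℤ) : ℂ) := by rw [← h]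
            _ = (Nat.totient g : ℂ) := by push_cast; rfl
  -- Conclude
  rw [step1, Finset.sum_congr rfl (fun d hd => by rw [step2 d hd]), step3, step4, step5]
  rw [norm_mul]
  have h1 : ‖((μ (q / g) : ℤ) : ℂ)‖ ≤ 1 := by
    rw [Complex.norm_intCast, ← Int.cast_abs, Int.abs_eq_natAbs]
    exact_mod_cast moebius_natAbs_le (q / g)
  have h2 : ‖((Nat.totient g : ℕ) : ℂ)‖ = (Nat.totient g : ℝ) := by
    rw [Complex.norm_natCast]
  calc ‖((μ (q / g) : ℤ) : ℂ)‖ * ‖((Nat.totient g : ℕ) : ℂ)‖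
      ≤ 1 * (Nat.totient g : ℝ) := by rw [h2]; exact mul_le_mul_of_nonneg_right h1 (by positivity)
    _ = (Nat.totient g : ℝ) := one_mul _
    _ ≤ (g : ℝ) := by exact_mod_cast Nat.totient_le g

lemma s_dvd_P (q₁ q₂ r P D d : ℕ) (hq₁ : Squarefree q₁) (hr : 0 < r) (hP : 0 < P)
    (hDQ : D * (P * Nat.gcd q₁ q₂) = q₁ * q₂ * r) (hq₂0 : q₂ ≠ 0) (hd : d ∣ q₁) :
    d / Nat.gcd d D ∣ P := by
  have hq₁0 : q₁ ≠ 0 := hq₁.ne_zero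
  have hprod0 : q₁ * q₂ * r ≠ 0 := by positivity
  have hD0 : D ≠ 0 := by
    intro h; rw [h, zero_mul] at hDQ; exact hprod0 hDQ.symm
  have hg0 : Nat.gcd q₁ q₂ ≠ 0 := Nat.gcd_ne_zero_left hq₁0
  set e := Nat.gcd d D with he
  set s := d / e with hs
  have hed : e ∣ d := Nat.gcd_dvd_left _ _
  have hdes : d = e * s := (Nat.mul_div_cancel' hed).symm
  have hd0 : d ≠ 0 := fun h => hq₁0 (Nat.eq_zero_of_zero_dvd (h ▸ hd))
  have hs0 : s ≠ 0 := by
    intro h; rw [h, mul_zero] at hdes; exact hd0 hdes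
  have hdsq : Squarefree d := Squarefree.squarefree_of_dvd hd hq₁
  have hes : Nat.Coprime e s := (Nat.squarefree_mul_iff.mp (hdes ▸ hdsq)).1
  have hssq : Squarefree s := (Nat.squarefree_mul_iff.mp (hdes ▸ hdsq)).2.2
  have hsD : Nat.Coprime s D := by
    have h1 : Nat.gcd s D ∣ e := Nat.dvd_gcd ((Nat.gcd_dvd_left s D).trans (Dvd.intro_left e hdes.symm))
      (Nat.gcd_dvd_right s D)
    have h2 : Nat.gcd s D ∣ Nat.gcd e s := Nat.dvd_gcd h1 (Nat.gcd_dvd_left s D)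
    rw [hes] at h2
    exact Nat.eq_one_of_dvd_one h2
  -- every prime of s divides P
  have hprime : ∀ p : ℕ, p.Prime → p ∣ s → p ∣ P := by
    intro p hp hps
    by_contra hpP
    have hpq₁ : p ∣ q₁ := (hps.trans (Dvd.intro_left e hdes.symm)).trans hd
    have hpD : ¬ p ∣ D := fun h => hp.one_lt.ne' (Nat.eq_one_of_dvd_one (hsD ▸ Nat.dvd_gcd hps h))
    have hpg : p ∣ Nat.gcd q₁ q₂ := by
      have h1 : p ∣ D * (P * Nat.gcd q₁ q₂) := hDQ ▸ hpq₁.trans (Dvd.intro_left (q₂*r) (by ring))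
      rcases (Nat.Prime.dvd_mul hp).mp h1 with h | h
      · exact absurd h hpD
      rcases (Nat.Prime.dvd_mul hp).mp h with h | h
      · exact absurd h hpP
      · exact h
    have hpq₂ : p ∣ q₂ := hpg.trans (Nat.gcd_dvd_right _ _)
    -- factorization contradiction
    have hr0 : r ≠ 0 := hr.ne'
    have hfact : (q₁ * q₂ * r).factorization p = (D * (P * Nat.gcd q₁ q₂)).factorization p := by
      rw [hDQ]
    rw [Nat.factorization_mul (by positivity) hr0, Nat.factorization_mul hq₁0 hq₂0,
      Nat.factorization_mul hD0 (by positivity), Nat.factorization_mul hP.ne' hg0] at hfact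
    simp only [Finsupp.coe_add, Pi.add_apply] at hfact
    have h1 : 1 ≤ q₁.factorization p := (Nat.Prime.factorization_pos_of_dvd hp hq₁0 hpq₁)
    have h2 : 1 ≤ q₂.factorization p := (Nat.Prime.factorization_pos_of_dvd hp hq₂0 hpq₂)
    have h3 : D.factorization p = 0 := Nat.factorization_eq_zero_of_not_dvd hpD
    have h4 : P.factorization p = 0 := Nat.factorization_eq_zero_of_not_dvd hpP
    have h5 : (Nat.gcd q₁ q₂).factorization p ≤ 1 :=
      Squarefree.natFactorization_le_one p (Squarefree.squarefree_of_dvd (Nat.gcd_dvd_left q₁ q₂) hq₁)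
    omega
  -- conclude s ∣ P
  rw [← Nat.factorization_le_iff_dvd hs0 hP.ne']
  intro p
  by_cases hps : p ∣ s
  · by_cases hp : p.Prime
    · have h1 : s.factorization p ≤ 1 := Squarefree.natFactorization_le_one p hssq
      have h2 : 1 ≤ P.factorization p :=
        Nat.Prime.factorization_pos_of_dvd hp hP.ne' (hprime p hp hps)
      omega
    · simp [Nat.factorization_eq_zero_of_not_prime _ hp]
  · simp [Nat.factorization_eq_zero_of_not_dvd hps]

lemma count_le (Q M : ℕ) (hM : 0 < M) (hMQ : M ∣ Q) (K : Finset ℕ) (hK : K ⊆ Finset.range Q)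
    (hAP : ∀ k ∈ K, ∀ k' ∈ K, (M : ℤ) ∣ (k : ℤ) - (k' : ℤ)) : K.card ≤ Q / M := by
  have : K.card ≤ (Finset.range (Q / M)).card := by
    apply Finset.card_le_card_of_injOn (fun k => k / M)
    · intro k hk
      have hkQ : k < Q := Finset.mem_range.mp (hK hk)
      rw [Finset.mem_coe, Finset.mem_range, Nat.div_lt_iff_lt_mul hM, Nat.div_mul_cancel hMQ]
      exact hkQ
    · intro k hk k' hk' hdiv
      have h1 := hAP k hk k' hk'
      have h2 : k ≡ k' [MOD M] := (Nat.modEq_iff_dvd).mpr (by rw [← neg_sub]; exact dvd_neg.mpr h1)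
      have hmod : k % M = k' % M := h2
      simp only at hdiv
      calc k = M * (k / M) + k % M := (Nat.div_add_mod k M).symm
        _ = M * (k' / M) + k' % M := by rw [hdiv, hmod]
        _ = k' := Nat.div_add_mod k' M
  simpa using this

lemma pair_bound (m₁ m₂ : ℤ) (hne : m₁ ≠ m₂) (r q₁ q₂ P D d₁ d₂ : ℕ) (hr : 0 < r)
    (hq₁ : Squarefree q₁) (hq₂ : Squarefree q₂) (hP : 0 < P)
    (hDQ : D * (P * Nat.gcd q₁ q₂) = q₁ * q₂ * r)
    (hd₁ : d₁ ∣ q₁) (hd₂ : d₂ ∣ q₂)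
    (hne' : ((Finset.range (P * Nat.gcd q₁ q₂)).filter (fun k : ℕ =>
      (d₁ : ℤ) ∣ m₁ + (k : ℤ) * D ∧ (d₂ : ℤ) ∣ m₂ + (k : ℤ) * D)).Nonempty) :
    Nat.totient d₁ * Nat.totient d₂ *
      ((Finset.range (P * Nat.gcd q₁ q₂)).filter (fun k : ℕ =>
        (d₁ : ℤ) ∣ m₁ + (k : ℤ) * D ∧ (d₂ : ℤ) ∣ m₂ + (k : ℤ) * D)).card
    ≤ (P * Nat.gcd q₁ q₂) *
        ((m₁ - m₂).natAbs * (Nat.totient (Nat.gcd d₁ D) * Nat.totient (Nat.gcd d₂ D))) := by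
  have hq₁0 : q₁ ≠ 0 := hq₁.ne_zero
  have hq₂0 : q₂ ≠ 0 := hq₂.ne_zero
  have hD0 : D ≠ 0 := by
    intro h; rw [h, zero_mul] at hDQ
    exact (by positivity : q₁ * q₂ * r ≠ 0) hDQ.symm
  set Q := P * Nat.gcd q₁ q₂ with hQdef
  set K := (Finset.range Q).filter (fun k : ℕ =>
      (d₁ : ℤ) ∣ m₁ + (k : ℤ) * D ∧ (d₂ : ℤ) ∣ m₂ + (k : ℤ) * D) with hK
  set e₁ := Nat.gcd d₁ D with he₁
  set e₂ := Nat.gcd d₂ D with he₂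
  set s₁ := d₁ / e₁ with hs₁
  set s₂ := d₂ / e₂ with hs₂
  have hd₁0 : d₁ ≠ 0 := fun h => hq₁0 (Nat.eq_zero_of_zero_dvd (h ▸ hd₁))
  have hd₂0 : d₂ ≠ 0 := fun h => hq₂0 (Nat.eq_zero_of_zero_dvd (h ▸ hd₂))
  have hd₁sq : Squarefree d₁ := Squarefree.squarefree_of_dvd hd₁ hq₁
  have hd₂sq : Squarefree d₂ := Squarefree.squarefree_of_dvd hd₂ hq₂
  have he₁d : e₁ ∣ d₁ := Nat.gcd_dvd_left _ _
  have he₂d : e₂ ∣ d₂ := Nat.gcd_dvd_left _ _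
  have hd₁es : d₁ = e₁ * s₁ := (Nat.mul_div_cancel' he₁d).symm
  have hd₂es : d₂ = e₂ * s₂ := (Nat.mul_div_cancel' he₂d).symm
  have hcop₁ : Nat.Coprime e₁ s₁ := (Nat.squarefree_mul_iff.mp (hd₁es ▸ hd₁sq)).1
  have hcop₂ : Nat.Coprime e₂ s₂ := (Nat.squarefree_mul_iff.mp (hd₂es ▸ hd₂sq)).1
  have hs₁D : Nat.Coprime s₁ D := Nat.coprime_div_gcd_of_squarefree hd₁sq hD0
  have hs₂D : Nat.Coprime s₂ D := Nat.coprime_div_gcd_of_squarefree hd₂sq hD0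
  have hs₁d : s₁ ∣ d₁ := Dvd.intro_left e₁ hd₁es.symm
  have hs₂d : s₂ ∣ d₂ := Dvd.intro_left e₂ hd₂es.symm
  have hs₁0 : s₁ ≠ 0 := by
    intro h; rw [h, mul_zero] at hd₁es; exact hd₁0 hd₁es
  have hs₂0 : s₂ ≠ 0 := by
    intro h; rw [h, mul_zero] at hd₂es; exact hd₂0 hd₂es
  have hs₁P : s₁ ∣ P := s_dvd_P q₁ q₂ r P D d₁ hq₁ hr hP hDQ hq₂0 hd₁
  have hs₂P : s₂ ∣ P := by
    have hDQ' : D * (P * Nat.gcd q₂ q₁) = q₂ * q₁ * r := by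
      rw [Nat.gcd_comm q₂ q₁, mul_comm q₂ q₁]; exact hDQ
    exact s_dvd_P q₂ q₁ r P D d₂ hq₂ hr hP hDQ' hq₁0 hd₂
  set h := Nat.gcd s₁ s₂ with hh
  set M := Nat.lcm s₁ s₂ with hM
  have hMP : M ∣ P := Nat.lcm_dvd hs₁P hs₂P
  have hMQ : M ∣ Q := hMP.trans (dvd_mul_right P _)
  have hM0 : 0 < M := Nat.pos_of_ne_zero (Nat.lcm_ne_zero hs₁0 hs₂0)
  -- all elements of K are congruent mod M
  have hAP : ∀ k ∈ K, ∀ k' ∈ K, (M : ℤ) ∣ (k : ℤ) - (k' : ℤ) := by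
    intro k hk k' hk'
    rw [hK, Finset.mem_filter] at hk hk'
    obtain ⟨-, hk1, hk2⟩ := hk
    obtain ⟨-, hk1', hk2'⟩ := hk'
    have key : ∀ (s d : ℕ) (m : ℤ), Nat.Coprime s D → s ∣ d →
        (d : ℤ) ∣ m + (k : ℤ) * D → (d : ℤ) ∣ m + (k' : ℤ) * D →
        (s : ℤ) ∣ (k : ℤ) - (k' : ℤ) := by
      intro s d m hsD hsd h1 h2
      have h3 : (s : ℤ) ∣ ((k : ℤ) - (k' : ℤ)) * D := by
        have := dvd_sub h1 h2
        have h4 : m + (k : ℤ) * D - (m + (k' : ℤ) * D) = ((k : ℤ) - k') * D := by ring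
        rw [h4] at this
        exact (Int.natCast_dvd_natCast.mpr hsd).trans this
      have h5 : s ∣ ((k : ℤ) - k').natAbs * D := by
        have := Int.natAbs_dvd_natAbs.mpr h3
        rwa [Int.natAbs_natCast, Int.natAbs_mul, Int.natAbs_natCast] at this
      have h6 : s ∣ ((k : ℤ) - k').natAbs := hsD.dvd_of_dvd_mul_right h5
      rw [← Int.natAbs_dvd_natAbs, Int.natAbs_natCast]
      exact h6
    have hA := key s₁ d₁ m₁ hs₁D hs₁d hk1 hk1'
    have hB := key s₂ d₂ m₂ hs₂D hs₂d hk2 hk2'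
    have hN : M ∣ ((k : ℤ) - k').natAbs := by
      refine Nat.lcm_dvd ?_ ?_
      · rw [← Int.natAbs_natCast s₁]; exact Int.natAbs_dvd_natAbs.mpr hA
      · rw [← Int.natAbs_natCast s₂]; exact Int.natAbs_dvd_natAbs.mpr hB
    rw [← Int.natAbs_dvd_natAbs, Int.natAbs_natCast]
    exact hN
  have hcard : K.card ≤ Q / M :=
    count_le Q M hM0 hMQ K (by rw [hK]; exact Finset.filter_subset _ _) hAP
  -- h divides m₁ - m₂
  obtain ⟨k₀, hk₀⟩ := hne'
  rw [hK, Finset.mem_filter] at hk₀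
  obtain ⟨-, hk₀1, hk₀2⟩ := hk₀
  have hhd : h ∣ (m₁ - m₂).natAbs := by
    have h1 : (h : ℤ) ∣ m₁ + (k₀ : ℤ) * D :=
      (Int.natCast_dvd_natCast.mpr ((Nat.gcd_dvd_left s₁ s₂).trans hs₁d)).trans hk₀1
    have h2 : (h : ℤ) ∣ m₂ + (k₀ : ℤ) * D :=
      (Int.natCast_dvd_natCast.mpr ((Nat.gcd_dvd_right s₁ s₂).trans hs₂d)).trans hk₀2
    have h3 : (h : ℤ) ∣ m₁ - m₂ := by
      have := dvd_sub h1 h2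
      rwa [show m₁ + (k₀ : ℤ) * D - (m₂ + (k₀ : ℤ) * D) = m₁ - m₂ by ring] at this
    rw [← Int.natAbs_dvd_natAbs, Int.natAbs_natCast] at h3
    exact h3
  have hΔ0 : 0 < (m₁ - m₂).natAbs := Int.natAbs_pos.mpr (sub_ne_zero.mpr hne)
  have hhΔ : h ≤ (m₁ - m₂).natAbs := Nat.le_of_dvd hΔ0 hhd
  -- main chain
  calc Nat.totient d₁ * Nat.totient d₂ * K.card
      ≤ Nat.totient d₁ * Nat.totient d₂ * (Q / M) :=
        Nat.mul_le_mul_left _ hcard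
    _ = Nat.totient e₁ * Nat.totient s₁ * (Nat.totient e₂ * Nat.totient s₂) * (Q / M) := by
        rw [hd₁es, hd₂es, Nat.totient_mul hcop₁, Nat.totient_mul hcop₂]
    _ ≤ Nat.totient e₁ * s₁ * (Nat.totient e₂ * s₂) * (Q / M) := by
        have := Nat.totient_le s₁
        have := Nat.totient_le s₂
        exact Nat.mul_le_mul_right _ (Nat.mul_le_mul (Nat.mul_le_mul_left _ (Nat.totient_le s₁))
          (Nat.mul_le_mul_left _ (Nat.totient_le s₂)))
    _ = Nat.totient e₁ * Nat.totient e₂ * (s₁ * s₂ * (Q / M)) := by ring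
    _ = Nat.totient e₁ * Nat.totient e₂ * (h * (M * (Q / M))) := by
        rw [← Nat.gcd_mul_lcm s₁ s₂, ← hh, ← hM]; ring
    _ = Nat.totient e₁ * Nat.totient e₂ * (h * Q) := by
        rw [Nat.mul_div_cancel' hMQ]
    _ ≤ Nat.totient e₁ * Nat.totient e₂ * ((m₁ - m₂).natAbs * Q) :=
        Nat.mul_le_mul_left _ (Nat.mul_le_mul_right _ hhΔ)
    _ = Q * ((m₁ - m₂).natAbs * (Nat.totient e₁ * Nat.totient e₂)) := by ring


lemma counting (m₁ m₂ : ℤ) (hm₁ : m₁ ≠ 0) (hm₂ : m₂ ≠ 0) (hne : m₁ ≠ m₂)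
    (r q₁ q₂ P D : ℕ) (hr : 0 < r) (hq₁ : Squarefree q₁) (hq₂ : Squarefree q₂) (hP : 0 < P)
    (hDQ : D * (P * Nat.gcd q₁ q₂) = q₁ * q₂ * r) :
    ∑ k ∈ Finset.range (P * Nat.gcd q₁ q₂),
        Nat.gcd (m₁ + (k : ℤ) * D).natAbs q₁ * Nat.gcd (m₂ + (k : ℤ) * D).natAbs q₂
      ≤ (P * Nat.gcd q₁ q₂) * ((m₁ * m₂ * (m₁ - m₂)).natAbs * P.divisors.card ^ 2) := by
  have hq₁0 : q₁ ≠ 0 := hq₁.ne_zero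
  have hq₂0 : q₂ ≠ 0 := hq₂.ne_zero
  set g := Nat.gcd q₁ q₂ with hg
  set Q := P * g with hQdef
  have hQ0 : 0 < Q := Nat.mul_pos hP (Nat.pos_of_ne_zero (Nat.gcd_ne_zero_left hq₁0))
  set n₁ := Nat.gcd m₁.natAbs q₁ with hn₁
  set n₂ := Nat.gcd m₂.natAbs q₂ with hn₂
  -- expand each gcd as a sum of totients over divisors
  have expand : ∀ (m : ℤ) (q : ℕ), q ≠ 0 → ∀ k : ℕ,
      Nat.gcd (m + (k : ℤ) * D).natAbs q
        = ∑ d ∈ q.divisors, if (d : ℤ) ∣ m + (k : ℤ) * D then Nat.totient d else 0 := by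
    intro m q hq0 k
    rw [← Nat.sum_totient (Nat.gcd (m + (k:ℤ) * D).natAbs q), gcd_divisors _ q hq0,
      Finset.sum_filter]
    refine Finset.sum_congr rfl fun d _ => ?_
    congr 1
    rw [eq_iff_iff, ← Int.natAbs_dvd_natAbs, Int.natAbs_natCast]
  -- rewrite the sum as a sum over divisor pairs
  have step1 : ∑ k ∈ Finset.range Q,
      Nat.gcd (m₁ + (k : ℤ) * D).natAbs q₁ * Nat.gcd (m₂ + (k : ℤ) * D).natAbs q₂
      = ∑ d ∈ q₁.divisors ×ˢ q₂.divisors, Nat.totient d.1 * Nat.totient d.2 *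
          ((Finset.range Q).filter (fun k : ℕ =>
            (d.1 : ℤ) ∣ m₁ + (k : ℤ) * D ∧ (d.2 : ℤ) ∣ m₂ + (k : ℤ) * D)).card := by
    have h1 : ∀ k ∈ Finset.range Q,
        Nat.gcd (m₁ + (k : ℤ) * D).natAbs q₁ * Nat.gcd (m₂ + (k : ℤ) * D).natAbs q₂
        = ∑ d ∈ q₁.divisors ×ˢ q₂.divisors,
            if (d.1 : ℤ) ∣ m₁ + (k : ℤ) * D ∧ (d.2 : ℤ) ∣ m₂ + (k : ℤ) * D
            then Nat.totient d.1 * Nat.totient d.2 else 0 := by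
      intro k _
      rw [expand m₁ q₁ hq₁0 k, expand m₂ q₂ hq₂0 k, Finset.sum_mul_sum, ← Finset.sum_product']
      refine Finset.sum_congr rfl fun d _ => ?_
      by_cases h₁ : (d.1 : ℤ) ∣ m₁ + (k : ℤ) * D <;>
        by_cases h₂ : (d.2 : ℤ) ∣ m₂ + (k : ℤ) * D <;>
        simp [h₁, h₂]
    rw [Finset.sum_congr rfl h1, Finset.sum_comm]
    refine Finset.sum_congr rfl fun d _ => ?_
    rw [← Finset.sum_filter, Finset.sum_const, smul_eq_mul, mul_comm]
  rw [step1]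
  classical
  set ι : ℕ × ℕ → (ℕ × ℕ) × (ℕ × ℕ) := fun d =>
    ((Nat.gcd d.1 D, d.1 / Nat.gcd d.1 D), (Nat.gcd d.2 D, d.2 / Nat.gcd d.2 D)) with hι
  set A := (q₁.divisors ×ˢ q₂.divisors).filter (fun d : ℕ × ℕ =>
    ((Finset.range Q).filter (fun k : ℕ =>
      (d.1 : ℤ) ∣ m₁ + (k : ℤ) * D ∧ (d.2 : ℤ) ∣ m₂ + (k : ℤ) * D)).Nonempty) with hA
  have hn₁0 : n₁ ≠ 0 := Nat.gcd_ne_zero_left (Int.natAbs_ne_zero.mpr hm₁)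
  have hn₂0 : n₂ ≠ 0 := Nat.gcd_ne_zero_left (Int.natAbs_ne_zero.mpr hm₂)
  have hsum_eq : ∑ d ∈ q₁.divisors ×ˢ q₂.divisors, Nat.totient d.1 * Nat.totient d.2 *
          ((Finset.range Q).filter (fun k : ℕ =>
            (d.1 : ℤ) ∣ m₁ + (k : ℤ) * D ∧ (d.2 : ℤ) ∣ m₂ + (k : ℤ) * D)).card
      = ∑ d ∈ A, Nat.totient d.1 * Nat.totient d.2 *
          ((Finset.range Q).filter (fun k : ℕ =>
            (d.1 : ℤ) ∣ m₁ + (k : ℤ) * D ∧ (d.2 : ℤ) ∣ m₂ + (k : ℤ) * D)).card := by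
    rw [hA]
    refine (Finset.sum_filter_of_ne ?_).symm
    intro d _ hne0
    have : ((Finset.range Q).filter (fun k : ℕ =>
        (d.1 : ℤ) ∣ m₁ + (k : ℤ) * D ∧ (d.2 : ℤ) ∣ m₂ + (k : ℤ) * D)).card ≠ 0 := by
      intro h0; rw [h0, mul_zero] at hne0; exact hne0 rfl
    exact Finset.card_pos.mp (Nat.pos_of_ne_zero this)
  rw [hsum_eq]
  have hstep2 : ∑ d ∈ A, Nat.totient d.1 * Nat.totient d.2 *
          ((Finset.range Q).filter (fun k : ℕ =>
            (d.1 : ℤ) ∣ m₁ + (k : ℤ) * D ∧ (d.2 : ℤ) ∣ m₂ + (k : ℤ) * D)).card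
      ≤ ∑ d ∈ A, Q * ((m₁ - m₂).natAbs *
          (Nat.totient (Nat.gcd d.1 D) * Nat.totient (Nat.gcd d.2 D))) := by
    refine Finset.sum_le_sum fun d hd => ?_
    rw [hA, Finset.mem_filter, Finset.mem_product, Nat.mem_divisors, Nat.mem_divisors] at hd
    exact pair_bound m₁ m₂ hne r q₁ q₂ P D d.1 d.2 hr hq₁ hq₂ hP hDQ hd.1.1.1 hd.1.2.1 hd.2
  -- facts about members of A
  have hmemA : ∀ d ∈ A, Nat.gcd d.1 D ∣ n₁ ∧ d.1 / Nat.gcd d.1 D ∣ P ∧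
      Nat.gcd d.2 D ∣ n₂ ∧ d.2 / Nat.gcd d.2 D ∣ P := by
    intro d hd
    rw [hA, Finset.mem_filter, Finset.mem_product, Nat.mem_divisors, Nat.mem_divisors] at hd
    obtain ⟨⟨⟨hd₁, -⟩, hd₂, -⟩, k₀, hk₀⟩ := hd
    rw [Finset.mem_filter] at hk₀
    obtain ⟨-, hk₁, hk₂⟩ := hk₀
    have key : ∀ (dd : ℕ) (m : ℤ), (dd : ℤ) ∣ m + (k₀ : ℤ) * D → Nat.gcd dd D ∣ m.natAbs := by
      intro dd m hdvd
      have h1 : ((Nat.gcd dd D : ℕ) : ℤ) ∣ m + (k₀ : ℤ) * D :=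
        (Int.natCast_dvd_natCast.mpr (Nat.gcd_dvd_left dd D)).trans hdvd
      have h2 : ((Nat.gcd dd D : ℕ) : ℤ) ∣ (k₀ : ℤ) * D :=
        Dvd.dvd.mul_left (Int.natCast_dvd_natCast.mpr (Nat.gcd_dvd_right dd D)) _
      have h3 : ((Nat.gcd dd D : ℕ) : ℤ) ∣ m := by
        have := dvd_sub h1 h2
        rwa [add_sub_cancel_right] at this
      have h4 := Int.natAbs_dvd_natAbs.mpr h3
      rwa [Int.natAbs_natCast] at h4
    have hDQ' : D * (P * Nat.gcd q₂ q₁) = q₂ * q₁ * r := by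
      rw [Nat.gcd_comm q₂ q₁, mul_comm q₂ q₁]; exact hDQ
    refine ⟨Nat.dvd_gcd (key d.1 m₁ hk₁) ((Nat.gcd_dvd_left d.1 D).trans hd₁),
      s_dvd_P q₁ q₂ r P D d.1 hq₁ hr hP hDQ hq₂0 hd₁,
      Nat.dvd_gcd (key d.2 m₂ hk₂) ((Nat.gcd_dvd_left d.2 D).trans hd₂),
      s_dvd_P q₂ q₁ r P D d.2 hq₂ hr hP hDQ' hq₁0 hd₂⟩
  -- injection into divisor quadruples
  have hinj : Set.InjOn ι A := by
    intro x hx y hy hxy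
    simp only [hι, Prod.mk.injEq] at hxy
    obtain ⟨⟨hE1, hS1⟩, hE2, hS2⟩ := hxy
    have h1 : x.1 = y.1 := by
      calc x.1 = Nat.gcd x.1 D * (x.1 / Nat.gcd x.1 D) :=
            (Nat.mul_div_cancel' (Nat.gcd_dvd_left _ _)).symm
        _ = Nat.gcd y.1 D * (y.1 / Nat.gcd y.1 D) := by rw [hS1, hE1]
        _ = y.1 := Nat.mul_div_cancel' (Nat.gcd_dvd_left _ _)
    have h2 : x.2 = y.2 := by
      calc x.2 = Nat.gcd x.2 D * (x.2 / Nat.gcd x.2 D) :=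
            (Nat.mul_div_cancel' (Nat.gcd_dvd_left _ _)).symm
        _ = Nat.gcd y.2 D * (y.2 / Nat.gcd y.2 D) := by rw [hS2, hE2]
        _ = y.2 := Nat.mul_div_cancel' (Nat.gcd_dvd_left _ _)
    exact Prod.ext h1 h2
  have hstep3 : ∑ d ∈ A, Nat.totient (Nat.gcd d.1 D) * Nat.totient (Nat.gcd d.2 D)
      ≤ n₁ * P.divisors.card * (n₂ * P.divisors.card) := by
    have himage : ∑ d ∈ A, Nat.totient (Nat.gcd d.1 D) * Nat.totient (Nat.gcd d.2 D)
        = ∑ y ∈ A.image ι, Nat.totient y.1.1 * Nat.totient y.2.1 := by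
      rw [Finset.sum_image (fun x hx y hy hxy => hinj hx hy hxy)]
    rw [himage]
    have hsub : A.image ι ⊆ (n₁.divisors ×ˢ P.divisors) ×ˢ (n₂.divisors ×ˢ P.divisors) := by
      intro y hy
      rw [Finset.mem_image] at hy
      obtain ⟨d, hd, rfl⟩ := hy
      obtain ⟨h1, h2, h3, h4⟩ := hmemA d hd
      simp only [hι, Finset.mem_product, Nat.mem_divisors]
      exact ⟨⟨⟨h1, hn₁0⟩, h2, hP.ne'⟩, ⟨h3, hn₂0⟩, h4, hP.ne'⟩
    calc ∑ y ∈ A.image ι, Nat.totient y.1.1 * Nat.totient y.2.1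
        ≤ ∑ y ∈ (n₁.divisors ×ˢ P.divisors) ×ˢ (n₂.divisors ×ˢ P.divisors),
            Nat.totient y.1.1 * Nat.totient y.2.1 := Finset.sum_le_sum_of_subset hsub
      _ = (∑ y₁ ∈ n₁.divisors ×ˢ P.divisors, Nat.totient y₁.1) *
            (∑ y₂ ∈ n₂.divisors ×ˢ P.divisors, Nat.totient y₂.1) := by
          rw [Finset.sum_mul_sum (n₁.divisors ×ˢ P.divisors) (n₂.divisors ×ˢ P.divisors)
            (fun y₁ => Nat.totient y₁.1) (fun y₂ => Nat.totient y₂.1), ← Finset.sum_product']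
      _ = n₁ * P.divisors.card * (n₂ * P.divisors.card) := by
          have hfac : ∀ n : ℕ, ∑ y ∈ n.divisors ×ˢ P.divisors, Nat.totient y.1
              = n * P.divisors.card := by
            intro n
            rw [Finset.sum_product]
            simp only [Finset.sum_const, smul_eq_mul]
            rw [← Finset.mul_sum, Nat.sum_totient, mul_comm]
          rw [hfac n₁, hfac n₂]
  -- assemble
  calc ∑ d ∈ A, Nat.totient d.1 * Nat.totient d.2 *
          ((Finset.range Q).filter (fun k : ℕ =>
            (d.1 : ℤ) ∣ m₁ + (k : ℤ) * D ∧ (d.2 : ℤ) ∣ m₂ + (k : ℤ) * D)).card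
      ≤ ∑ d ∈ A, Q * ((m₁ - m₂).natAbs *
          (Nat.totient (Nat.gcd d.1 D) * Nat.totient (Nat.gcd d.2 D))) := hstep2
    _ = Q * (m₁ - m₂).natAbs *
          ∑ d ∈ A, Nat.totient (Nat.gcd d.1 D) * Nat.totient (Nat.gcd d.2 D) := by
        rw [Finset.mul_sum]
        exact Finset.sum_congr rfl fun d _ => by ring
    _ ≤ Q * (m₁ - m₂).natAbs * (n₁ * P.divisors.card * (n₂ * P.divisors.card)) :=
        Nat.mul_le_mul_left _ hstep3
    _ ≤ Q * (m₁ - m₂).natAbs * (m₁.natAbs * P.divisors.card * (m₂.natAbs * P.divisors.card)) := by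
        refine Nat.mul_le_mul_left _ (Nat.mul_le_mul ?_ ?_)
        · exact Nat.mul_le_mul_right _ (Nat.gcd_le_left _ (Int.natAbs_pos.mpr hm₁))
        · exact Nat.mul_le_mul_right _ (Nat.gcd_le_left _ (Int.natAbs_pos.mpr hm₂))
    _ = Q * ((m₁ * m₂ * (m₁ - m₂)).natAbs * P.divisors.card ^ 2) := by
        rw [Int.natAbs_mul, Int.natAbs_mul]
        ring

/-- Lemma 9.2: for distinct nonzero integers `m₁, m₂`, `b` coprime to `r`, squarefree
`q₁, q₂`, and `P ∣ lcm(q₁,q₂)·r`, the exponential sum over pairs `(a₁, a₂)` of reduced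
residues satisfying `a₁q₂r + a₂q₁r ≡ bq₁q₂ (mod P·(q₁,q₂))` is at most
`|m₁ m₂ (m₁ - m₂)| · τ(P)²`. -/
theorem key_lemma_r1 (m₁ m₂ : ℤ) (hm₁ : m₁ ≠ 0) (hm₂ : m₂ ≠ 0) (hne : m₁ ≠ m₂)
    (r : ℕ) (hr : 0 < r) (b : ℤ) (hb : Int.gcd b (r : ℤ) = 1)
    (q₁ q₂ : ℕ) (hq₁ : Squarefree q₁) (hq₂ : Squarefree q₂)
    (P : ℕ) (hP : 0 < P) (hPdvd : P ∣ Nat.lcm q₁ q₂ * r) :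
    ‖(∑ a ∈ (Finset.Icc 1 q₁ ×ˢ Finset.Icc 1 q₂).filter
          (fun a => Nat.gcd a.1 q₁ = 1 ∧ Nat.gcd a.2 q₂ = 1 ∧
            ((a.1 : ℤ) * q₂ * r + (a.2 : ℤ) * q₁ * r) % ((P * Nat.gcd q₁ q₂ : ℕ) : ℤ) =
              (b * q₁ * q₂) % ((P * Nat.gcd q₁ q₂ : ℕ) : ℤ)),
        e ((m₁ : ℝ) * (a.1 : ℝ) / q₁ + (m₂ : ℝ) * (a.2 : ℝ) / q₂))‖ ≤
      ((m₁ * m₂ * (m₁ - m₂)).natAbs : ℝ) * (P.divisors.card : ℝ) ^ 2 := by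
  have hq₁0 : q₁ ≠ 0 := hq₁.ne_zero
  have hq₂0 : q₂ ≠ 0 := hq₂.ne_zero
  set g := Nat.gcd q₁ q₂ with hg
  have hg0 : g ≠ 0 := Nat.gcd_ne_zero_left hq₁0
  set Q := P * g with hQdef
  have hQ0 : 0 < Q := Nat.pos_of_ne_zero (Nat.mul_ne_zero hP.ne' hg0)
  have hQdvd : Q ∣ q₁ * q₂ * r := by
    have h1 : Nat.lcm q₁ q₂ * g = q₁ * q₂ := by rw [mul_comm, Nat.gcd_mul_lcm]
    have h2 : Q ∣ (Nat.lcm q₁ q₂ * r) * g := mul_dvd_mul hPdvd dvd_rfl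
    refine h2.trans (dvd_of_eq ?_)
    rw [← h1]; ring
  set D := q₁ * q₂ * r / Q with hD
  have hDQ : D * Q = q₁ * q₂ * r := Nat.div_mul_cancel hQdvd
  clear_value D
  clear_value Q
  clear_value g
  set F : ℕ × ℕ → ℤ := fun a => (a.1 : ℤ) * q₂ * r + (a.2 : ℤ) * q₁ * r - b * q₁ * q₂ with hF
  set θ : ℕ × ℕ → ℝ := fun a => (m₁ : ℝ) * (a.1 : ℝ) / q₁ + (m₂ : ℝ) * (a.2 : ℝ) / q₂ with hθ
  set A₀ := (Finset.Icc 1 q₁).filter (fun x => Nat.gcd x q₁ = 1) ×ˢ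
      (Finset.Icc 1 q₂).filter (fun x => Nat.gcd x q₂ = 1) with hA₀
  -- rewrite the summation set
  have hsplit : (Finset.Icc 1 q₁ ×ˢ Finset.Icc 1 q₂).filter
      (fun a => Nat.gcd a.1 q₁ = 1 ∧ Nat.gcd a.2 q₂ = 1 ∧
        ((a.1 : ℤ) * q₂ * r + (a.2 : ℤ) * q₁ * r) % ((Q : ℕ) : ℤ) =
          (b * q₁ * q₂) % ((Q : ℕ) : ℤ))
      = A₀.filter (fun a => (Q : ℤ) ∣ F a) := by
    rw [hA₀, ← Finset.filter_product, Finset.filter_filter]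
    refine Finset.filter_congr fun a _ => ?_
    have hmd : (((a.1 : ℤ) * q₂ * r + (a.2 : ℤ) * q₁ * r) % ((Q : ℕ) : ℤ) =
        (b * q₁ * q₂) % ((Q : ℕ) : ℤ)) ↔ (Q : ℤ) ∣ F a := by
      rw [Int.emod_eq_emod_iff_emod_sub_eq_zero]
      exact ⟨Int.dvd_of_emod_eq_zero, Int.emod_eq_zero_of_dvd⟩
    rw [hF]
    constructor
    · rintro ⟨h1, h2, h3⟩; exact ⟨⟨h1, h2⟩, hmd.mp h3⟩
    · rintro ⟨⟨h1, h2⟩, h3⟩; exact ⟨h1, h2, hmd.mpr h3⟩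
  rw [hsplit]
  -- orthogonality expansion
  have hQC : ((Q : ℕ) : ℂ) ≠ 0 := Nat.cast_ne_zero.mpr hQ0.ne'
  have hexp : ∑ a ∈ A₀.filter (fun a => (Q : ℤ) ∣ F a), e (θ a)
      = (1 / (Q : ℂ)) * ∑ k ∈ Finset.range Q, ∑ a ∈ A₀,
          e ((k : ℝ) * ((F a : ℤ) : ℝ) / Q + θ a) := by
    rw [Finset.sum_comm, Finset.sum_filter, Finset.mul_sum]
    refine Finset.sum_congr rfl fun a _ => ?_
    have h1 : ∀ k ∈ Finset.range Q, e ((k : ℝ) * ((F a : ℤ) : ℝ) / Q + θ a)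
        = e ((k : ℝ) * ((F a : ℤ) : ℝ) / Q) * e (θ a) := fun k _ => e_add _ _
    rw [Finset.sum_congr rfl h1, ← Finset.sum_mul, geo Q hQ0 (F a)]
    split
    · rw [← mul_assoc, one_div, inv_mul_cancel₀ hQC, one_mul]
    · rw [zero_mul, mul_zero]
  rw [hexp]
  -- factor the inner sum over pairs and bound
  have hinner : ∀ k : ℕ, ‖∑ a ∈ A₀, e ((k : ℝ) * ((F a : ℤ) : ℝ) / Q + θ a)‖
      ≤ (Nat.gcd (m₁ + (k : ℤ) * D).natAbs q₁ : ℝ) * (Nat.gcd (m₂ + (k : ℤ) * D).natAbs q₂ : ℝ) := by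
    intro k
    have hphase : ∀ a ∈ A₀, e ((k : ℝ) * ((F a : ℤ) : ℝ) / Q + θ a)
        = e ((a.1 : ℝ) * ((m₁ + (k : ℤ) * D : ℤ) : ℝ) / q₁) *
          e ((a.2 : ℝ) * ((m₂ + (k : ℤ) * D : ℤ) : ℝ) / q₂) *
          e (-(((k : ℤ) * b * q₁ * q₂ : ℤ) : ℝ) / Q) := by
      intro a _
      rw [← e_add, ← e_add]
      congr 1
      have hq₁R : (q₁ : ℝ) ≠ 0 := Nat.cast_ne_zero.mpr hq₁0
      have hq₂R : (q₂ : ℝ) ≠ 0 := Nat.cast_ne_zero.mpr hq₂0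
      have hQR0 : (Q : ℝ) ≠ 0 := Nat.cast_ne_zero.mpr hQ0.ne'
      have hDQR : (D : ℝ) * (Q : ℝ) = (q₁ : ℝ) * (q₂ : ℝ) * (r : ℝ) := by exact_mod_cast hDQ
      rw [hF, hθ]
      push_cast
      rw [eq_div_of_mul_eq hQR0 hDQR]
      field_simp
      ring
    rw [Finset.sum_congr rfl hphase, hA₀, Finset.sum_product]
    have step : ∑ x ∈ (Finset.Icc 1 q₁).filter (fun x => Nat.gcd x q₁ = 1),
          ∑ y ∈ (Finset.Icc 1 q₂).filter (fun y => Nat.gcd y q₂ = 1),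
          e ((x : ℝ) * ((m₁ + (k : ℤ) * D : ℤ) : ℝ) / q₁) *
            e ((y : ℝ) * ((m₂ + (k : ℤ) * D : ℤ) : ℝ) / q₂) *
            e (-(((k : ℤ) * b * q₁ * q₂ : ℤ) : ℝ) / Q)
        = (∑ x ∈ (Finset.Icc 1 q₁).filter (fun x => Nat.gcd x q₁ = 1),
            e ((x : ℝ) * ((m₁ + (k : ℤ) * D : ℤ) : ℝ) / q₁)) *
          (∑ y ∈ (Finset.Icc 1 q₂).filter (fun y => Nat.gcd y q₂ = 1),
            e ((y : ℝ) * ((m₂ + (k : ℤ) * D : ℤ) : ℝ) / q₂)) *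
          e (-(((k : ℤ) * b * q₁ * q₂ : ℤ) : ℝ) / Q) := by
      simp only [← Finset.sum_mul, ← Finset.mul_sum]
    rw [step, norm_mul, norm_mul, abs_e, mul_one]
    have h₁ := ramanujan_bound q₁ hq₁ (m₁ + (k : ℤ) * D)
    have h₂ := ramanujan_bound q₂ hq₂ (m₂ + (k : ℤ) * D)
    exact mul_le_mul h₁ h₂ (norm_nonneg _) (Nat.cast_nonneg _)
  -- final assembly
  rw [norm_mul]
  have habs1 : ‖(1 / (Q : ℂ))‖ = 1 / (Q : ℝ) := by
    rw [norm_div, norm_one, Complex.norm_natCast]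
  rw [habs1]
  have hsum_bound : ‖∑ k ∈ Finset.range Q, ∑ a ∈ A₀,
        e ((k : ℝ) * ((F a : ℤ) : ℝ) / Q + θ a)‖
      ≤ ∑ k ∈ Finset.range Q,
          ((Nat.gcd (m₁ + (k : ℤ) * D).natAbs q₁ : ℝ) * (Nat.gcd (m₂ + (k : ℤ) * D).natAbs q₂ : ℝ)) :=
    (norm_sum_le _ _).trans (Finset.sum_le_sum fun k _ => hinner k)
  have hc : (∑ k ∈ Finset.range Q,
        Nat.gcd (m₁ + (k : ℤ) * D).natAbs q₁ * Nat.gcd (m₂ + (k : ℤ) * D).natAbs q₂)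
      ≤ Q * ((m₁ * m₂ * (m₁ - m₂)).natAbs * P.divisors.card ^ 2) := by
    have hDQ' : D * (P * Nat.gcd q₁ q₂) = q₁ * q₂ * r := by rw [← hg, ← hQdef]; exact hDQ
    have h := counting m₁ m₂ hm₁ hm₂ hne r q₁ q₂ P D hr hq₁ hq₂ hP hDQ'
    rw [← hg, ← hQdef] at h
    exact h
  have hcR : (∑ k ∈ Finset.range Q,
        ((Nat.gcd (m₁ + (k : ℤ) * D).natAbs q₁ : ℝ) * (Nat.gcd (m₂ + (k : ℤ) * D).natAbs q₂ : ℝ)))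
      ≤ (Q : ℝ) * (((m₁ * m₂ * (m₁ - m₂)).natAbs : ℝ) * (P.divisors.card : ℝ) ^ 2) := by
    have h1 : (∑ k ∈ Finset.range Q,
        ((Nat.gcd (m₁ + (k : ℤ) * D).natAbs q₁ : ℝ) * (Nat.gcd (m₂ + (k : ℤ) * D).natAbs q₂ : ℝ)))
        = ((∑ k ∈ Finset.range Q,
            Nat.gcd (m₁ + (k : ℤ) * D).natAbs q₁ * Nat.gcd (m₂ + (k : ℤ) * D).natAbs q₂ : ℕ) : ℝ) := by
      rw [Nat.cast_sum]
      exact Finset.sum_congr rfl fun k _ => (Nat.cast_mul _ _).symm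
    rw [h1]
    have h2 := (Nat.cast_le (α := ℝ)).mpr hc
    rw [Nat.cast_mul, Nat.cast_mul, Nat.cast_pow] at h2
    exact h2
  have hQR : (Q : ℝ) ≠ 0 := Nat.cast_ne_zero.mpr hQ0.ne'
  calc (1 / (Q : ℝ)) * ‖∑ k ∈ Finset.range Q, ∑ a ∈ A₀,
        e ((k : ℝ) * ((F a : ℤ) : ℝ) / Q + θ a)‖
      ≤ (1 / (Q : ℝ)) * ((Q : ℝ) * (((m₁ * m₂ * (m₁ - m₂)).natAbs : ℝ) *
          (P.divisors.card : ℝ) ^ 2)) :=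
        mul_le_mul_of_nonneg_left (hsum_bound.trans hcR) (by positivity)
    _ = ((m₁ * m₂ * (m₁ - m₂)).natAbs : ℝ) * (P.divisors.card : ℝ) ^ 2 := by
        field_simp
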